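/- The restriction of the 2D rotational operator rot(v) = ∂₁v₂ - ∂₂v₁ to the L²(K)-orthogonal complement G_{k-2}(K)^⊥ of the gradient space inside [P_{k-2}(K)]² is a linear isomorphism onto P_{k-3}(K). -/

import Mathlib

open MvPolynomial MeasureTheory Finsupp

noncomputable section RotAux

namespace RotAux

abbrev MP := MvPolynomial (Fin 2) ℝ

/-- evaluation of a 2-variable polynomial as a function on `ℝ × ℝ`. -/
def ev (p : MP) (x : ℝ × ℝ) : ℝ := eval ![x.1, x.2] p

lemma ev_add (p q : MP) (x : ℝ × ℝ) : ev (p + q) x = ev p x + ev q x := by simp [ev]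
lemma ev_mul (p q : MP) (x : ℝ × ℝ) : ev (p * q) x = ev p x * ev q x := by simp [ev]

lemma ev_analytic (p : MP) : AnalyticOnNhd ℝ (ev p) Set.univ := by
  induction p using MvPolynomial.induction_on with
  | C a =>
    have : ev (C a) = fun _ : ℝ × ℝ => a := by funext x; simp [ev]
    rw [this]; exact analyticOnNhd_const
  | add p q hp hq =>
    have : ev (p + q) = fun x => ev p x + ev q x := by funext x; simp [ev]
    rw [this]; exact hp.add hq
  | mul_X p i hp =>
    have hXi : AnalyticOnNhd ℝ (fun x : ℝ × ℝ => (![x.1, x.2] : Fin 2 → ℝ) i) Set.univ := by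
      fin_cases i
      · simpa using (ContinuousLinearMap.fst ℝ ℝ ℝ).analyticOnNhd Set.univ
      · simpa using (ContinuousLinearMap.snd ℝ ℝ ℝ).analyticOnNhd Set.univ
    have : ev (p * X i) = fun x => ev p x * (![x.1, x.2] : Fin 2 → ℝ) i := by
      funext x; simp [ev]
    rw [this]; exact hp.mul hXi

lemma ev_continuous (p : MP) : Continuous (ev p) := by
  rw [← continuousOn_univ]
  exact (ev_analytic p).continuousOn

lemma eq_zero_of_ev_zero_on {p : MP} {U : Set (ℝ × ℝ)} (hU : IsOpen U) (hne : U.Nonempty)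
    (h : ∀ x ∈ U, ev p x = 0) : p = 0 := by
  obtain ⟨x₀, hx₀⟩ := hne
  have hz : Set.EqOn (ev p) 0 Set.univ := by
    refine (ev_analytic p).eqOn_zero_of_preconnected_of_eventuallyEq_zero isPreconnected_univ
      (Set.mem_univ x₀) ?_
    filter_upwards [hU.mem_nhds hx₀] with x hx
    exact h x hx
  refine MvPolynomial.funext (fun y => ?_)
  have hy : (![ (y 0 : ℝ), y 1] : Fin 2 → ℝ) = y := by
    funext i; fin_cases i <;> rfl
  have := hz (Set.mem_univ ((y 0 : ℝ), y 1))
  simp only [ev, hy, Pi.zero_apply] at this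
  simpa using this

lemma integrableOn_ev (p : MP) {K : Set (ℝ × ℝ)} (hKb : Bornology.IsBounded K) :
    IntegrableOn (ev p) K := by
  have hc : IsCompact (closure K) := hKb.isCompact_closure
  have := ((ev_continuous p).continuousOn :
      ContinuousOn (ev p) (closure K)).integrableOn_compact (μ := volume) hc
  exact this.mono_set subset_closure

lemma integral_ev_sq_pos {p : MP} (hp : p ≠ 0) {K : Set (ℝ × ℝ)} (hKo : IsOpen K)
    (hKb : Bornology.IsBounded K) (hKm : 0 < volume K) :
    0 < ∫ x in K, ev (p * p) x := by
  have hKne : K.Nonempty := MeasureTheory.nonempty_of_measure_ne_zero hKm.ne'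
  have hx : ∃ x₀ ∈ K, ev p x₀ ≠ 0 := by
    by_contra hcon
    push_neg at hcon
    exact hp (eq_zero_of_ev_zero_on hKo hKne hcon)
  obtain ⟨x₀, hx₀K, hx₀⟩ := hx
  have hnonneg : 0 ≤ᵐ[volume.restrict K] fun x => ev (p * p) x := by
    refine Filter.Eventually.of_forall (fun x => ?_)
    simp only [Pi.zero_apply, ev_mul]
    exact mul_self_nonneg _
  have hint : IntegrableOn (fun x => ev (p * p) x) K := integrableOn_ev _ hKb
  rw [setIntegral_pos_iff_support_of_nonneg_ae hnonneg hint]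
  have hopen : IsOpen (K ∩ {x | ev p x ≠ 0}) :=
    hKo.inter (isOpen_ne_fun (ev_continuous p) continuous_const)
  have hsub : K ∩ {x | ev p x ≠ 0} ⊆ Function.support (fun x => ev (p * p) x) ∩ K := by
    rintro x ⟨hxK, hxne⟩
    refine ⟨?_, hxK⟩
    simp only [Function.mem_support, ev_mul]
    exact mul_ne_zero hxne hxne
  refine lt_of_lt_of_le ?_ (measure_mono hsub)
  exact hopen.measure_pos volume ⟨x₀, hx₀K, hx₀⟩


/-- formal antiderivative with respect to variable `i`. -/
def ader (i : Fin 2) (p : MP) : MP :=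
  (AddMonoidAlgebra.coeff p).sum fun m c => monomial (m + Finsupp.single i 1) (((m i : ℝ) + 1)⁻¹ * c)

lemma ader_monomial (i : Fin 2) (m : Fin 2 →₀ ℕ) (c : ℝ) :
    ader i (monomial m c) = monomial (m + Finsupp.single i 1) (((m i : ℝ) + 1)⁻¹ * c) := by
  classical
  rw [ader, sum_monomial_eq (by simp)]

lemma ader_add (i : Fin 2) (p q : MP) : ader i (p + q) = ader i p + ader i q := by
  classical
  unfold ader
  rw [AddMonoidAlgebra.coeff_add, Finsupp.sum_add_index']
  · intro m; simp
  · intro m c₁ c₂; rw [mul_add, map_add]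

lemma ader_zero (i : Fin 2) : ader i 0 = 0 := by
  simp [ader]

lemma add_single_apply_self (m : Fin 2 →₀ ℕ) (i : Fin 2) :
    (m + Finsupp.single i (1:ℕ)) i = m i + 1 := by simp

lemma add_single_apply_ne (m : Fin 2 →₀ ℕ) {i j : Fin 2} (h : j ≠ i) :
    (m + Finsupp.single i (1:ℕ)) j = m j := by
  have h' : ¬ i = j := fun hij => h hij.symm
  simp [Finsupp.single_apply, h']

lemma sub_single_apply_ne (m : Fin 2 →₀ ℕ) {i j : Fin 2} (h : j ≠ i) :
    (m - Finsupp.single j (1:ℕ)) i = m i := by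
  simp [Finsupp.tsub_apply, Finsupp.single_apply, h]

lemma add_sub_single_comm {i j : Fin 2} (h : j ≠ i) (m : Fin 2 →₀ ℕ) :
    m + Finsupp.single i 1 - Finsupp.single j 1
      = m - Finsupp.single j 1 + Finsupp.single i 1 := by
  ext a
  simp only [Finsupp.add_apply, Finsupp.tsub_apply, Finsupp.single_apply]
  split_ifs with h1 h2
  · exact absurd (h2.trans h1.symm) h
  all_goals omega

lemma sub_sub_single_comm {i j : Fin 2} (m : Fin 2 →₀ ℕ) :
    m - Finsupp.single j 1 - Finsupp.single i 1
      = m - Finsupp.single i 1 - Finsupp.single j 1 := by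
  ext a
  simp only [Finsupp.tsub_apply, Finsupp.single_apply]
  split_ifs <;> omega

lemma pderiv_ader (i : Fin 2) (p : MP) : pderiv i (ader i p) = p := by
  induction p using MvPolynomial.induction_on' with
  | monomial m c =>
    rw [ader_monomial, pderiv_monomial, add_single_apply_self]
    have h1 : m + Finsupp.single i 1 - Finsupp.single i 1 = m := by
      ext a; simp
    rw [h1]
    have h3 : (((m i : ℝ) + 1)⁻¹ * c) * ((m i + 1 : ℕ) : ℝ) = c := by
      push_cast
      field_simp
    rw [h3]
  | add p q hp hq =>
    rw [ader_add, map_add, hp, hq]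

lemma pderiv_ader_comm {i j : Fin 2} (h : j ≠ i) (p : MP) :
    pderiv j (ader i p) = ader i (pderiv j p) := by
  induction p using MvPolynomial.induction_on' with
  | monomial m c =>
    rw [ader_monomial, pderiv_monomial, pderiv_monomial, ader_monomial,
      add_sub_single_comm h, add_single_apply_ne m h, sub_single_apply_ne m h]
    ring_nf
  | add p q hp hq =>
    rw [ader_add, map_add, map_add, hp, hq, ader_add]

lemma pderiv_pderiv_comm (i j : Fin 2) (p : MP) :
    pderiv i (pderiv j p) = pderiv j (pderiv i p) := by
  rcases eq_or_ne i j with rfl | hij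
  · rfl
  induction p using MvPolynomial.induction_on' with
  | monomial m c =>
    rw [pderiv_monomial, pderiv_monomial, pderiv_monomial, pderiv_monomial,
      sub_sub_single_comm, sub_single_apply_ne m hij, sub_single_apply_ne m (Ne.symm hij)]
    ring_nf
  | add p q hp hq =>
    rw [map_add, map_add, map_add, map_add, hp, hq]

lemma sum_add_single (m : Fin 2 →₀ ℕ) (i : Fin 2) :
    ((m + Finsupp.single i 1).sum fun _ e => e) = (m.sum fun _ e => e) + 1 := by
  classical
  rw [Finsupp.sum_add_index' (fun _ => rfl) (fun _ _ _ => rfl)]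
  simp

lemma totalDegree_ader_le (i : Fin 2) (p : MP) :
    (ader i p).totalDegree ≤ p.totalDegree + 1 := by
  classical
  refine le_trans (totalDegree_finset_sum _ _) ?_
  rw [Finset.sup_le_iff]
  intro m hm
  refine le_trans (totalDegree_monomial_le _ _) ?_
  show ((m + Finsupp.single i 1).sum fun _ e => e) ≤ p.totalDegree + 1
  rw [sum_add_single]
  exact Nat.add_le_add_right (le_totalDegree hm) 1

lemma totalDegree_pderiv_le (i : Fin 2) (p : MP) {n : ℕ} (h : p.totalDegree ≤ n + 1) :
    (pderiv i p).totalDegree ≤ n := by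
  classical
  conv_lhs => rw [p.as_sum]
  rw [map_sum]
  refine le_trans (totalDegree_finset_sum _ _) ?_
  rw [Finset.sup_le_iff]
  intro m hm
  rw [pderiv_monomial]
  rcases Nat.eq_zero_or_pos (m i) with h0 | h0
  · rw [h0]; simp
  · refine le_trans (totalDegree_monomial_le _ _) ?_
    show ((m - Finsupp.single i 1).sum fun _ e => e) ≤ n
    have hsum : ((m - Finsupp.single i 1).sum fun _ e => e) + 1 = m.sum fun _ e => e := by
      have hm' : m = (m - Finsupp.single i 1) + Finsupp.single i 1 := by
        ext a
        simp only [Finsupp.add_apply, Finsupp.tsub_apply, Finsupp.single_apply]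
        split_ifs with hc
        · subst hc; omega
        · omega
      conv_rhs => rw [hm']
      rw [sum_add_single]
    have := (le_totalDegree hm).trans h
    omega

lemma pderiv_eq_zero_of_totalDegree_eq_zero (i : Fin 2) {p : MP} (h : p.totalDegree = 0) :
    pderiv i p = 0 := by
  classical
  conv_lhs => rw [p.as_sum]
  rw [map_sum]
  refine Finset.sum_eq_zero fun m hm => ?_
  have := ((totalDegree_eq_zero_iff (Fin 2) p).mp h) m hm i
  rw [pderiv_monomial, this]
  simp

/-- Polynomial Poincaré lemma in two variables. -/
lemma exists_potential {v₁ v₂ : MP} {n : ℕ} (h : pderiv 0 v₂ = pderiv 1 v₁)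
    (h1 : v₁.totalDegree ≤ n) (h2 : v₂.totalDegree ≤ n) :
    ∃ p : MP, p.totalDegree ≤ n + 1 ∧ pderiv 0 p = v₁ ∧ pderiv 1 p = v₂ := by
  set w : MP := v₂ - pderiv 1 (ader 0 v₁) with hw
  refine ⟨ader 0 v₁ + ader 1 w, ?_, ?_, ?_⟩
  · refine le_trans (totalDegree_add _ _) (max_le ((totalDegree_ader_le 0 v₁).trans ?_) ?_)
    · omega
    · refine le_trans (totalDegree_ader_le 1 w) ?_
      have hd : w.totalDegree ≤ n := by
        rw [hw]
        refine le_trans (totalDegree_sub _ _) (max_le h2 ?_)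
        rw [pderiv_ader_comm (by decide) v₁]
        rcases Nat.eq_zero_or_pos n with rfl | hn
        · have : pderiv 1 v₁ = 0 :=
            pderiv_eq_zero_of_totalDegree_eq_zero 1 (Nat.le_zero.mp h1)
          rw [this, ader_zero]
          simp
        · obtain ⟨m, rfl⟩ : ∃ m, n = m + 1 := ⟨n - 1, by omega⟩
          refine le_trans (totalDegree_ader_le 0 _) ?_
          have := totalDegree_pderiv_le 1 v₁ (n := m) h1
          omega
      omega
  · rw [map_add, pderiv_ader]
    have hz : pderiv 0 (ader 1 w) = 0 := by
      rw [pderiv_ader_comm (by decide) w]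
      have : pderiv 0 w = 0 := by
        rw [hw, map_sub, h, pderiv_ader_comm (by decide) v₁, pderiv_ader]
        exact sub_self _
      rw [this, ader_zero]
    rw [hz, add_zero]
  · rw [map_add, pderiv_ader, hw]
    ring


/-! ### The L² pairing -/

def Bip (K : Set (ℝ × ℝ)) (u v : MP × MP) : ℝ :=
  ∫ x in K, ev (u.1 * v.1 + u.2 * v.2) x

lemma Bip_symm (K : Set (ℝ × ℝ)) (u v : MP × MP) : Bip K u v = Bip K v u := by
  unfold Bip
  rw [show u.1 * v.1 + u.2 * v.2 = v.1 * u.1 + v.2 * u.2 by ring]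

lemma Bip_add_left {K : Set (ℝ × ℝ)} (hKb : Bornology.IsBounded K) (u u' v : MP × MP) :
    Bip K (u + u') v = Bip K u v + Bip K u' v := by
  unfold Bip
  rw [show (u + u').1 * v.1 + (u + u').2 * v.2
      = (u.1 * v.1 + u.2 * v.2) + (u'.1 * v.1 + u'.2 * v.2) by
    simp only [Prod.fst_add, Prod.snd_add]; ring]
  simp only [ev_add (u.1 * v.1 + u.2 * v.2) (u'.1 * v.1 + u'.2 * v.2)]
  have h1 : IntegrableOn (ev (u.1 * v.1 + u.2 * v.2)) K := integrableOn_ev _ hKb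
  have h2 : IntegrableOn (ev (u'.1 * v.1 + u'.2 * v.2)) K := integrableOn_ev _ hKb
  exact integral_add h1 h2

lemma Bip_smul_left (K : Set (ℝ × ℝ)) (r : ℝ) (u v : MP × MP) :
    Bip K (r • u) v = r * Bip K u v := by
  unfold Bip
  rw [show (r • u).1 * v.1 + (r • u).2 * v.2 = C r * (u.1 * v.1 + u.2 * v.2) by
    simp only [Prod.smul_fst, Prod.smul_snd, smul_eq_C_mul]; ring]
  have hev : ∀ x : ℝ × ℝ, ev (C r * (u.1 * v.1 + u.2 * v.2)) x
      = r * ev (u.1 * v.1 + u.2 * v.2) x := by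
    intro x
    rw [ev_mul]
    congr 1
    simp [ev]
  simp only [hev]
  have h := integral_smul (μ := MeasureTheory.Measure.restrict MeasureTheory.volume K) r
    (ev (u.1 * v.1 + u.2 * v.2))
  simp only [smul_eq_mul] at h
  exact h

lemma Bip_self_nonneg {K : Set (ℝ × ℝ)} (hKo : IsOpen K) (u : MP × MP) :
    0 ≤ Bip K u u := by
  refine setIntegral_nonneg hKo.measurableSet fun x _ => ?_
  simp only [ev_add, ev_mul]
  exact add_nonneg (mul_self_nonneg _) (mul_self_nonneg _)

lemma Bip_self_pos {K : Set (ℝ × ℝ)} (hKo : IsOpen K) (hKb : Bornology.IsBounded K)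
    (hKm : 0 < volume K) {u : MP × MP} (hu : u ≠ 0) : 0 < Bip K u u := by
  unfold Bip
  simp only [ev_add]
  rw [integral_add (integrableOn_ev _ hKb) (integrableOn_ev _ hKb)]
  have h1 : (0:ℝ) ≤ ∫ x in K, ev (u.1 * u.1) x := by
    refine setIntegral_nonneg hKo.measurableSet fun x _ => ?_
    rw [ev_mul]; exact mul_self_nonneg _
  have h2 : (0:ℝ) ≤ ∫ x in K, ev (u.2 * u.2) x := by
    refine setIntegral_nonneg hKo.measurableSet fun x _ => ?_
    rw [ev_mul]; exact mul_self_nonneg _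
  have hcases : u.1 ≠ 0 ∨ u.2 ≠ 0 := by
    by_contra hcon
    push_neg at hcon
    exact hu (Prod.ext hcon.1 hcon.2)
  rcases hcases with h | h
  · have := integral_ev_sq_pos h hKo hKb hKm
    linarith
  · have := integral_ev_sq_pos h hKo hKb hKm
    linarith

/-- The gradient as a linear map. -/
def grad : MP →ₗ[ℝ] MP × MP :=
  LinearMap.prod (pderiv (R := ℝ) (0 : Fin 2)).toLinearMap (pderiv (1 : Fin 2)).toLinearMap

lemma grad_apply (p : MP) : grad p = (pderiv 0 p, pderiv 1 p) := rfl

end RotAux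

open RotAux

/-- The restriction of the 2D rotational operator `rot(v) = ∂₁v₂ - ∂₂v₁` to the
`L²(K)`-orthogonal complement `G_{k-2}(K)^⊥` of the gradient space inside `[P_{k-2}(K)]²`
is a (linear) isomorphism onto `P_{k-3}(K)` (with `P_{-1} = {0}` when `k = 2`). -/
theorem rot_iso_on_orth_complement (k : ℕ) (hk : 2 ≤ k) (K : Set (ℝ × ℝ))
    (hKo : IsOpen K) (hKb : Bornology.IsBounded K) (hKm : 0 < volume K) :
    ∃ S : Submodule ℝ (MvPolynomial (Fin 2) ℝ × MvPolynomial (Fin 2) ℝ),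
      (S : Set (MvPolynomial (Fin 2) ℝ × MvPolynomial (Fin 2) ℝ)) =
        {v | v ∈ (restrictTotalDegree (Fin 2) ℝ (k - 2)).prod
              (restrictTotalDegree (Fin 2) ℝ (k - 2)) ∧
          ∀ p ∈ restrictTotalDegree (Fin 2) ℝ (k - 1),
            (∫ x in K, (eval ![x.1, x.2] v.1 * eval ![x.1, x.2] (pderiv 0 p)
              + eval ![x.1, x.2] v.2 * eval ![x.1, x.2] (pderiv 1 p))) = 0} ∧
      Set.BijOn (fun v : MvPolynomial (Fin 2) ℝ × MvPolynomial (Fin 2) ℝ =>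
          pderiv 0 v.2 - pderiv 1 v.1)
        (S : Set (MvPolynomial (Fin 2) ℝ × MvPolynomial (Fin 2) ℝ))
        ((if k = 2 then (⊥ : Submodule ℝ (MvPolynomial (Fin 2) ℝ))
          else restrictTotalDegree (Fin 2) ℝ (k - 3)) :
            Set (MvPolynomial (Fin 2) ℝ)) := by
  classical
  letI core : InnerProductSpace.Core ℝ (MP × MP) :=
    { inner := Bip K
      conj_inner_symm := fun x y => by simpa using Bip_symm K y x
      re_inner_nonneg := fun x => by simpa using Bip_self_nonneg hKo x
      add_left := fun x y z => by simpa using Bip_add_left hKb x y z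
      smul_left := fun x y r => by simpa using Bip_smul_left K r x y
      definite := fun x hx => by
        by_contra hne
        exact (Bip_self_pos hKo hKb hKm hne).ne' hx }
  letI : NormedAddCommGroup (MP × MP) := core.toNormedAddCommGroup
  letI : InnerProductSpace ℝ (MP × MP) := InnerProductSpace.ofCore core.toCore
  have hip : ∀ u v : MP × MP, (inner ℝ u v : ℝ) = Bip K u v := fun _ _ => rfl
  set W : Submodule ℝ (MP × MP) :=
    (restrictTotalDegree (Fin 2) ℝ (k - 2)).prod (restrictTotalDegree (Fin 2) ℝ (k - 2)) with hW
  set G : Submodule ℝ (MP × MP) :=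
    Submodule.map grad (restrictTotalDegree (Fin 2) ℝ (k - 1)) with hG
  haveI : FiniteDimensional ℝ ↥G := Module.Finite.map _ grad
  haveI := FiniteDimensional.proper_rclike ℝ ↥G
  have e1 : k - 2 + 1 = k - 1 := by omega
  -- membership characterization
  have hmemS : ∀ v : MP × MP, v ∈ W ⊓ Gᗮ ↔
      (v ∈ W ∧ ∀ p ∈ restrictTotalDegree (Fin 2) ℝ (k - 1), Bip K (grad p) v = 0) := by
    intro v
    rw [Submodule.mem_inf]
    refine and_congr_right fun _ => ?_
    rw [Submodule.mem_orthogonal]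
    constructor
    · intro h p hp
      rw [← hip]
      exact h (grad p) ⟨p, hp, rfl⟩
    · rintro h u ⟨p, hp, rfl⟩
      rw [hip]
      exact h p hp
  refine ⟨W ⊓ Gᗮ, ?_, ?_, ?_, ?_⟩
  · -- carrier equality
    ext v
    rw [SetLike.mem_coe, hmemS v]
    refine and_congr_right fun _ => ?_
    refine forall_congr' fun p => forall_congr' fun hp => ?_
    have : Bip K (grad p) v = ∫ x in K, (eval ![x.1, x.2] v.1 * eval ![x.1, x.2] (pderiv 0 p)
        + eval ![x.1, x.2] v.2 * eval ![x.1, x.2] (pderiv 1 p)) := by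
      unfold Bip
      rw [grad_apply]
      rw [show pderiv 0 p * v.1 + pderiv 1 p * v.2
          = v.1 * pderiv 0 p + v.2 * pderiv 1 p by ring]
      simp only [ev, map_add, map_mul]
    rw [this]
  · -- MapsTo
    intro v hv
    rw [SetLike.mem_coe, hmemS v] at hv
    obtain ⟨hvW, -⟩ := hv
    rw [Submodule.mem_prod] at hvW
    rw [mem_restrictTotalDegree] at hvW
    obtain ⟨hv1, hv2⟩ := hvW
    rw [mem_restrictTotalDegree] at hv2
    by_cases hk2 : k = 2
    · simp only [if_pos hk2]
      rw [SetLike.mem_coe, Submodule.mem_bot]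
      have hz1 : pderiv (1 : Fin 2) v.1 = 0 :=
        pderiv_eq_zero_of_totalDegree_eq_zero 1 (by omega)
      have hz2 : pderiv (0 : Fin 2) v.2 = 0 :=
        pderiv_eq_zero_of_totalDegree_eq_zero 0 (by omega)
      rw [hz1, hz2, sub_zero]
    · simp only [if_neg hk2]
      rw [SetLike.mem_coe, mem_restrictTotalDegree]
      have e2 : k - 3 + 1 = k - 2 := by omega
      refine le_trans (totalDegree_sub _ _) (max_le ?_ ?_)
      · exact totalDegree_pderiv_le 0 v.2 (by omega)
      · exact totalDegree_pderiv_le 1 v.1 (by omega)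
  · -- InjOn
    intro u hu v hv heq
    rw [SetLike.mem_coe] at hu hv
    have hd : u - v ∈ W ⊓ Gᗮ := Submodule.sub_mem _ hu hv
    rw [hmemS] at hd
    obtain ⟨hdW, hdO⟩ := hd
    rw [Submodule.mem_prod, mem_restrictTotalDegree, mem_restrictTotalDegree] at hdW
    have h0 : pderiv (0 : Fin 2) (u - v).2 = pderiv (1 : Fin 2) (u - v).1 := by
      simp only [Prod.fst_sub, Prod.snd_sub, map_sub]
      simp only at heq
      linear_combination heq
    obtain ⟨p, hpd, hp0, hp1⟩ := exists_potential h0 hdW.1 hdW.2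
    have hpmem : p ∈ restrictTotalDegree (Fin 2) ℝ (k - 1) := by
      rw [mem_restrictTotalDegree]
      omega
    have hgrad : grad p = u - v := by
      rw [grad_apply, hp0, hp1]
    have hBip : Bip K (u - v) (u - v) = 0 := by
      have := hdO p hpmem
      rwa [hgrad] at this
    have : u - v = 0 := core.definite _ hBip
    exact sub_eq_zero.mp this
  · -- SurjOn
    intro q hq
    by_cases hk2 : k = 2
    · simp only [if_pos hk2] at hq
      rw [SetLike.mem_coe, Submodule.mem_bot] at hq
      refine ⟨0, ?_, ?_⟩
      · rw [SetLike.mem_coe]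
        exact Submodule.zero_mem _
      · simp only [Prod.fst_zero, Prod.snd_zero, map_zero, sub_zero, hq]
    · simp only [if_neg hk2] at hq
      rw [SetLike.mem_coe, mem_restrictTotalDegree] at hq
      have e2 : k - 3 + 1 = k - 2 := by omega
      set w : MP × MP := ((0 : MP), ader 0 q) with hw
      have hwW : w ∈ W := by
        rw [Submodule.mem_prod]
        constructor
        · rw [mem_restrictTotalDegree, hw]
          simp
        · rw [mem_restrictTotalDegree, hw]
          refine le_trans (totalDegree_ader_le 0 q) ?_
          omega
      obtain ⟨g, hgG, z, hzO, hwz⟩ := Submodule.exists_add_mem_mem_orthogonal (K := G) w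
      have hgW : g ∈ W := by
        obtain ⟨p, hp, rfl⟩ := hgG
        rw [SetLike.mem_coe, mem_restrictTotalDegree] at hp
        rw [Submodule.mem_prod, grad_apply]
        constructor
        · rw [mem_restrictTotalDegree]
          exact totalDegree_pderiv_le 0 p (by omega)
        · rw [mem_restrictTotalDegree]
          exact totalDegree_pderiv_le 1 p (by omega)
      have hzw : z = w - g := by
        rw [hwz]; abel
      have hzS : z ∈ W ⊓ Gᗮ := by
        rw [Submodule.mem_inf]
        exact ⟨hzw ▸ Submodule.sub_mem _ hwW hgW, hzO⟩
      refine ⟨z, ?_, ?_⟩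
      · rw [SetLike.mem_coe]; exact hzS
      · obtain ⟨p, hp, hgp⟩ := hgG
        have hrotg : pderiv (0 : Fin 2) g.2 - pderiv (1 : Fin 2) g.1 = 0 := by
          rw [← hgp, grad_apply]
          simp only
          rw [pderiv_pderiv_comm]
          exact sub_self _
        have hrotw : pderiv (0 : Fin 2) w.2 - pderiv (1 : Fin 2) w.1 = q := by
          rw [hw]
          simp only [map_zero, sub_zero]
          exact pderiv_ader 0 q
        simp only [hzw, Prod.fst_sub, Prod.snd_sub, map_sub]
        linear_combination hrotw - hrotg
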